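/- S restricted to M⁰ has a saddle point — i.e. a critical point that is neither a local maximum point nor a local minimum point of S restricted to M⁰ — if and only if D = 0, b² = 3ac, and d_2T_2/(nT_p) < R_t, where R_t = −b/(3a). -/

import Mathlib

open ContinuousLinearMap in
noncomputable def lmap (g₁ g₂ g₃ : ℝ) : ℝ × ℝ × ℝ →L[ℝ] ℝ :=
  g₁ • fst ℝ ℝ (ℝ × ℝ) + g₂ • ((fst ℝ ℝ ℝ).comp (snd ℝ ℝ (ℝ × ℝ)))
    + g₃ • ((snd ℝ ℝ ℝ).comp (snd ℝ ℝ (ℝ × ℝ)))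

@[simp] lemma lmap_apply (g₁ g₂ g₃ : ℝ) (v : ℝ × ℝ × ℝ) :
    lmap g₁ g₂ g₃ v = g₁ * v.1 + g₂ * v.2.1 + g₃ * v.2.2 := by
  simp [lmap, smul_eq_mul]

lemma hasFDerivAt_pattern (e₁ e₂ e₃ e₄ e₅ β α₁ α₂ : ℝ)
    (hβ : β ≠ 0) (h₁ : α₁ ≠ 0) (h₂ : α₂ ≠ 0) :
    HasFDerivAt (fun q : ℝ × ℝ × ℝ =>
        (e₁ * q.2.1 + e₂ * q.2.2) / q.1 ^ 2 + e₃ / q.1 + e₄ / q.2.1 + e₅ / q.2.2)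
      (lmap (-2 * (e₁ * α₁ + e₂ * α₂) / β ^ 3 - e₃ / β ^ 2)
        (e₁ / β ^ 2 - e₄ / α₁ ^ 2) (e₂ / β ^ 2 - e₅ / α₂ ^ 2)) (β, α₁, α₂) := by
  have hfst : HasFDerivAt (fun q : ℝ × ℝ × ℝ => q.1)
      (ContinuousLinearMap.fst ℝ ℝ (ℝ × ℝ)) (β, α₁, α₂) := hasFDerivAt_fst
  have hp1 : HasFDerivAt (fun q : ℝ × ℝ × ℝ => q.2.1)
      ((ContinuousLinearMap.fst ℝ ℝ ℝ).comp (ContinuousLinearMap.snd ℝ ℝ (ℝ × ℝ)))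
      (β, α₁, α₂) := hasFDerivAt_fst.comp _ hasFDerivAt_snd
  have hp2 : HasFDerivAt (fun q : ℝ × ℝ × ℝ => q.2.2)
      ((ContinuousLinearMap.snd ℝ ℝ ℝ).comp (ContinuousLinearMap.snd ℝ ℝ (ℝ × ℝ)))
      (β, α₁, α₂) := hasFDerivAt_snd.comp _ hasFDerivAt_snd
  have hnum : HasFDerivAt (fun q : ℝ × ℝ × ℝ => e₁ * q.2.1 + e₂ * q.2.2) _ (β, α₁, α₂) :=
    (hp1.const_mul e₁).add (hp2.const_mul e₂)
  have hi1 : HasFDerivAt (fun q : ℝ × ℝ × ℝ => q.1⁻¹) _ (β, α₁, α₂) :=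
    (hasDerivAt_inv hβ).comp_hasFDerivAt _ hfst
  have hi2 : HasFDerivAt (fun q : ℝ × ℝ × ℝ => q.2.1⁻¹) _ (β, α₁, α₂) :=
    (hasDerivAt_inv h₁).comp_hasFDerivAt _ hp1
  have hi3 : HasFDerivAt (fun q : ℝ × ℝ × ℝ => q.2.2⁻¹) _ (β, α₁, α₂) :=
    (hasDerivAt_inv h₂).comp_hasFDerivAt _ hp2
  have hG : HasFDerivAt (fun q : ℝ × ℝ × ℝ =>
      (e₁ * q.2.1 + e₂ * q.2.2) * (q.1⁻¹ * q.1⁻¹) + e₃ * q.1⁻¹ + e₄ * q.2.1⁻¹ + e₅ * q.2.2⁻¹)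
      _ (β, α₁, α₂) :=
    ((((hnum.mul' (hi1.mul' hi1))).add (hi1.const_mul e₃)).add (hi2.const_mul e₄)).add
      (hi3.const_mul e₅)
  have hfun : (fun q : ℝ × ℝ × ℝ =>
        (e₁ * q.2.1 + e₂ * q.2.2) / q.1 ^ 2 + e₃ / q.1 + e₄ / q.2.1 + e₅ / q.2.2)
      = (fun q : ℝ × ℝ × ℝ =>
        (e₁ * q.2.1 + e₂ * q.2.2) * (q.1⁻¹ * q.1⁻¹) + e₃ * q.1⁻¹ + e₄ * q.2.1⁻¹ + e₅ * q.2.2⁻¹) := by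
    funext q; ring
  rw [hfun]
  refine hG.congr_fderiv ?_
  apply ContinuousLinearMap.ext
  intro v
  simp [smul_eq_mul]
  field_simp
  ring

set_option maxHeartbeats 2000000 in
/-- On `M⁰` (parametrized by solving `F = 0` for `β`), `S` equals a negative multiple of the
cubic `P` evaluated at `α₂/β`. -/
lemma Sval_ident (d₁ d₂ κ₁ κ₂ n Tp T₁ T₂ α₁ α₂ : ℝ)
    (hd₁ : 0 < d₁) (hd₂ : 0 < d₂) (hn : 0 < n) (hTp : 0 < Tp) (hT₁ : 0 < T₁) (hT₂ : 0 < T₂)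
    (hα₁ : 0 < α₁) (hα₂ : 0 < α₂) (β : ℝ)
    (hβ : β = n * Tp * α₁ * α₂ / (d₁ * T₁ * α₂ + d₂ * T₂ * α₁))
    (a b c d : ℝ)
    (ha : a = n * d₂ * (1 - κ₂) * Tp)
    (hb : b = d₁ ^ 2 * (1 - κ₁) * T₁ - d₂ ^ 2 * (1 - κ₂) * T₂ + 2 * n ^ 2 * Tp
        - n ^ 2 * κ₁ * Tp ^ 2 / T₁)
    (hc : c = -(2 * n * d₂ * T₂) + 2 * n * d₂ * κ₁ * Tp * T₂ / T₁ - n * d₂ * κ₂ * Tp)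
    (hd : d = -(d₂ ^ 2 * κ₁ * T₂ ^ 2 / T₁) + κ₂ * d₂ ^ 2 * T₂) :
    -(1/4) * (d₁ * (1 - κ₁) * α₁ + d₂ * (1 - κ₂) * α₂) / β ^ 2
        - n / (2 * β) + (1/4) * (d₁ * κ₁ / α₁ + d₂ * κ₂ / α₂)
      = -(α₁ / (4 * d₁ * T₁ * α₂ ^ 2)) *
          (a * (α₂ / β) ^ 3 + b * (α₂ / β) ^ 2 + c * (α₂ / β) + d) := by
  have hD : 0 < d₁ * T₁ * α₂ + d₂ * T₂ * α₁ := by positivity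
  subst ha hb hc hd hβ
  field_simp
  ring

set_option maxHeartbeats 2000000 in
/-- The two contractions of `∇S` with the tangent basis of `ker ∇F`, expressed through the
cubic `P` and its derivative at `α₂/β`. -/
lemma E_ident (d₁ d₂ κ₁ κ₂ n Tp T₁ T₂ α₁ α₂ : ℝ)
    (hd₁ : 0 < d₁) (hd₂ : 0 < d₂) (hn : 0 < n) (hTp : 0 < Tp) (hT₁ : 0 < T₁) (hT₂ : 0 < T₂)
    (hα₁ : 0 < α₁) (hα₂ : 0 < α₂) (β : ℝ)
    (hβ : β = n * Tp * α₁ * α₂ / (d₁ * T₁ * α₂ + d₂ * T₂ * α₁))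
    (a b c d : ℝ)
    (ha : a = n * d₂ * (1 - κ₂) * Tp)
    (hb : b = d₁ ^ 2 * (1 - κ₁) * T₁ - d₂ ^ 2 * (1 - κ₂) * T₂ + 2 * n ^ 2 * Tp
        - n ^ 2 * κ₁ * Tp ^ 2 / T₁)
    (hc : c = -(2 * n * d₂ * T₂) + 2 * n * d₂ * κ₁ * Tp * T₂ / T₁ - n * d₂ * κ₂ * Tp)
    (hd : d = -(d₂ ^ 2 * κ₁ * T₂ ^ 2 / T₁) + κ₂ * d₂ ^ 2 * T₂) :
    (((1/2) * (d₁ * (1 - κ₁) * α₁ + d₂ * (1 - κ₂) * α₂) / β ^ 3 + n / (2 * β ^ 2))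
          * (β ^ 2 / (n * Tp))
      + (-(1/4) * (d₁ * (1 - κ₁)) / β ^ 2 - (1/4) * (d₁ * κ₁) / α₁ ^ 2) * (α₁ ^ 2 / (d₁ * T₁))
      = -(α₁ ^ 2 / (4 * d₁ ^ 2 * T₁ ^ 2 * α₂ ^ 2)) *
          (a * (α₂ / β) ^ 3 + b * (α₂ / β) ^ 2 + c * (α₂ / β) + d)
        + (α₁ / (4 * d₁ * T₁ * α₂ * (n * Tp))) *
          (3 * a * (α₂ / β) ^ 2 + 2 * b * (α₂ / β) + c))
    ∧ (((1/2) * (d₁ * (1 - κ₁) * α₁ + d₂ * (1 - κ₂) * α₂) / β ^ 3 + n / (2 * β ^ 2))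
          * (β ^ 2 / (n * Tp))
      + (-(1/4) * (d₂ * (1 - κ₂)) / β ^ 2 - (1/4) * (d₂ * κ₂) / α₂ ^ 2) * (α₂ ^ 2 / (d₂ * T₂))
      = (α₁ / (2 * d₁ * T₁ * α₂ * (d₂ * T₂))) *
          (a * (α₂ / β) ^ 3 + b * (α₂ / β) ^ 2 + c * (α₂ / β) + d)
        - (1 / (4 * d₂ * T₂ * (n * Tp))) *
          (3 * a * (α₂ / β) ^ 2 + 2 * b * (α₂ / β) + c)) := by
  have hD : 0 < d₁ * T₁ * α₂ + d₂ * T₂ * α₁ := by positivity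
  subst ha hb hc hd hβ
  constructor
  · field_simp
    ring
  · field_simp
    ring

/-- A cubic with a double root at `x₀` factorizes. -/
lemma cubic_factor (a b c d x₀ ρ : ℝ) (hρ : a * ρ = -b - 2 * a * x₀)
    (h0 : a * x₀ ^ 3 + b * x₀ ^ 2 + c * x₀ + d = 0)
    (h1 : 3 * a * x₀ ^ 2 + 2 * b * x₀ + c = 0) (x : ℝ) :
    a * x ^ 3 + b * x ^ 2 + c * x + d = a * (x - x₀) ^ 2 * (x - ρ) := by
  linear_combination h0 + (x - x₀) * h1 + (x - x₀) ^ 2 * hρ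

lemma disc_identity (a b c d : ℝ) (hb2 : b ^ 2 = 3 * a * c) :
    27 * a ^ 2 * (18*a*b*c*d - 4*b^3*d + b^2*c^2 - 4*a*c^3 - 27*a^2*d^2)
      = -(27 * a ^ 2 * d - b ^ 3) ^ 2 := by
  linear_combination (b^4 + 3*a*b^2*c + 36*a^2*c^2 - 162*a^2*b*d) * hb2


lemma sign_helper1 (t u : ℝ) (ht : 0 < t) (hu : u < 0) : 0 < -t * u := by nlinarith
lemma sign_helper2 (t u : ℝ) (ht : 0 < t) (hu : 0 < u) : -t * u < 0 := by nlinarith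
lemma sign_helper3 (t u : ℝ) (ht : 0 ≤ t) (hu : 0 ≤ u) : -t * u ≤ 0 := by nlinarith
lemma sign_helper4 (t u : ℝ) (ht : 0 ≤ t) (hu : u ≤ 0) : 0 ≤ -t * u := by nlinarith

set_option maxHeartbeats 4000000 in
/-- Theorem 5.8 (1): `S|_{M⁰}` has a saddle point (a critical point that is neither a local
maximum nor a local minimum of `S|_{M⁰}`) iff `D = 0`, `b² = 3ac` and `d₂T₂/(nT_p) < R_t`. -/
theorem stmt_13 (d₁ d₂ : ℕ) (hd₁ : 0 < d₁) (hd₂ : 0 < d₂)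
    (κ₁ κ₂ : ℝ) (hκ₁0 : 0 ≤ κ₁) (hκ₁1 : κ₁ < 1) (hκ₂0 : 0 ≤ κ₂) (hκ₂1 : κ₂ < 1)
    (n : ℝ) (hn : n = 2 * ((d₁ : ℝ) * (1 - κ₁) + (d₂ : ℝ) * (1 - κ₂)))
    (Tp T₁ T₂ : ℝ) (hTp : 0 < Tp) (hT₁ : 0 < T₁) (hT₂ : 0 < T₂)
    (S F : ℝ × ℝ × ℝ → ℝ)
    (hS : ∀ p, S p = -(1/4) * ((d₁ : ℝ) * (1 - κ₁) * p.2.1 + (d₂ : ℝ) * (1 - κ₂) * p.2.2) / p.1^2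
        - n / (2 * p.1) + (1/4) * ((d₁ : ℝ) * κ₁ / p.2.1 + (d₂ : ℝ) * κ₂ / p.2.2))
    (hF : ∀ p, F p = -n * Tp / p.1 + (d₁ : ℝ) * T₁ / p.2.1 + (d₂ : ℝ) * T₂ / p.2.2)
    (M0 : Set (ℝ × ℝ × ℝ))
    (hM0 : M0 = {p | 0 < p.1 ∧ 0 < p.2.1 ∧ 0 < p.2.2 ∧ F p = 0})
    (a b c d : ℝ)
    (ha : a = n * (d₂ : ℝ) * (1 - κ₂) * Tp)
    (hb : b = (d₁ : ℝ)^2 * (1 - κ₁) * T₁ - (d₂ : ℝ)^2 * (1 - κ₂) * T₂ + 2 * n^2 * Tp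
        - n^2 * κ₁ * Tp^2 / T₁)
    (hc : c = -(2 * n * (d₂ : ℝ) * T₂) + 2 * n * (d₂ : ℝ) * κ₁ * Tp * T₂ / T₁
        - n * (d₂ : ℝ) * κ₂ * Tp)
    (hd : d = -((d₂ : ℝ)^2 * κ₁ * T₂^2 / T₁) + κ₂ * (d₂ : ℝ)^2 * T₂)
    (Disc : ℝ)
    (hDisc : Disc = 18*a*b*c*d - 4*b^3*d + b^2*c^2 - 4*a*c^3 - 27*a^2*d^2)
    (Rt : ℝ) (hRt : Rt = -b / (3*a)) :
    (∃ p ∈ M0, (∀ v : ℝ × ℝ × ℝ, fderiv ℝ F p v = 0 → fderiv ℝ S p v = 0) ∧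
        ¬ IsLocalMaxOn S M0 p ∧ ¬ IsLocalMinOn S M0 p)
      ↔ (Disc = 0 ∧ b^2 = 3*a*c ∧ (d₂ : ℝ) * T₂ / (n * Tp) < Rt) := by
  have hd₁' : (0:ℝ) < d₁ := by exact_mod_cast hd₁
  have hd₂' : (0:ℝ) < d₂ := by exact_mod_cast hd₂
  have hk₁ : (0:ℝ) < 1 - κ₁ := by linarith
  have hk₂ : (0:ℝ) < 1 - κ₂ := by linarith
  have hn0 : 0 < n := by rw [hn]; nlinarith
  have ha0 : 0 < a := by rw [ha]; positivity
  have point_data : ∀ p ∈ M0, 0 < p.1 ∧ 0 < p.2.1 ∧ 0 < p.2.2 ∧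
      p.1 = n * Tp * p.2.1 * p.2.2 / ((d₁ : ℝ) * T₁ * p.2.2 + (d₂ : ℝ) * T₂ * p.2.1) := by
    intro p hp
    rw [hM0] at hp
    obtain ⟨h1, h2, h3, hF0⟩ := hp
    refine ⟨h1, h2, h3, ?_⟩
    rw [hF] at hF0
    have hD : 0 < (d₁ : ℝ) * T₁ * p.2.2 + (d₂ : ℝ) * T₂ * p.2.1 := by positivity
    rw [eq_div_iff (ne_of_gt hD)]
    field_simp at hF0
    linarith [hF0]
  have hxgt : ∀ p ∈ M0, (d₂ : ℝ) * T₂ / (n * Tp) < p.2.2 / p.1 := by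
    intro p hp
    obtain ⟨h1, h2, h3, hβ⟩ := point_data p hp
    have hD : 0 < (d₁ : ℝ) * T₁ * p.2.2 + (d₂ : ℝ) * T₂ * p.2.1 := by positivity
    rw [div_lt_div_iff₀ (by positivity) h1]
    have hβ' : p.1 * ((d₁ : ℝ) * T₁ * p.2.2 + (d₂ : ℝ) * T₂ * p.2.1) = n * Tp * p.2.1 * p.2.2 := by
      rw [hβ]; field_simp
    have key : (p.2.2 * (n * Tp) - (d₂ : ℝ) * T₂ * p.1) * p.2.1 = p.1 * ((d₁:ℝ) * T₁) * p.2.2 := by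
      linear_combination -hβ'
    have h5 : 0 < (p.2.2 * (n * Tp) - (d₂ : ℝ) * T₂ * p.1) * p.2.1 := by
      rw [key]; positivity
    nlinarith [h5, h2]
  -- value of S on M0
  have hSval : ∀ p ∈ M0, S p = -(p.2.1 / (4 * (d₁:ℝ) * T₁ * p.2.2 ^ 2)) *
      (a * (p.2.2 / p.1) ^ 3 + b * (p.2.2 / p.1) ^ 2 + c * (p.2.2 / p.1) + d) := by
    intro p hp
    obtain ⟨h1, h2, h3, hβ⟩ := point_data p hp
    rw [hS]
    exact Sval_ident (d₁:ℝ) (d₂:ℝ) κ₁ κ₂ n Tp T₁ T₂ p.2.1 p.2.2 hd₁' hd₂' hn0 hTp hT₁ hT₂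
      h2 h3 p.1 hβ a b c d ha hb hc hd
  -- derivatives
  have hFd : ∀ p : ℝ × ℝ × ℝ, 0 < p.1 → 0 < p.2.1 → 0 < p.2.2 →
      HasFDerivAt F (lmap (n * Tp / p.1 ^ 2) (-((d₁:ℝ) * T₁) / p.2.1 ^ 2)
        (-((d₂:ℝ) * T₂) / p.2.2 ^ 2)) p := by
    intro p h1 h2 h3
    have hfun : F = (fun q : ℝ × ℝ × ℝ =>
        ((0:ℝ) * q.2.1 + (0:ℝ) * q.2.2) / q.1 ^ 2 + (-(n * Tp)) / q.1 + ((d₁:ℝ) * T₁) / q.2.1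
          + ((d₂:ℝ) * T₂) / q.2.2) := by
      funext q; rw [hF]; ring
    rw [hfun]
    have h := hasFDerivAt_pattern 0 0 (-(n * Tp)) ((d₁:ℝ) * T₁) ((d₂:ℝ) * T₂) p.1 p.2.1 p.2.2
      h1.ne' h2.ne' h3.ne'
    convert h using 2 <;> ring
  have hSd : ∀ p : ℝ × ℝ × ℝ, 0 < p.1 → 0 < p.2.1 → 0 < p.2.2 →
      HasFDerivAt S (lmap
        ((1/2) * ((d₁:ℝ) * (1 - κ₁) * p.2.1 + (d₂:ℝ) * (1 - κ₂) * p.2.2) / p.1 ^ 3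
          + n / (2 * p.1 ^ 2))
        (-(1/4) * ((d₁:ℝ) * (1 - κ₁)) / p.1 ^ 2 - (1/4) * ((d₁:ℝ) * κ₁) / p.2.1 ^ 2)
        (-(1/4) * ((d₂:ℝ) * (1 - κ₂)) / p.1 ^ 2 - (1/4) * ((d₂:ℝ) * κ₂) / p.2.2 ^ 2)) p := by
    intro p h1 h2 h3
    have hfun : S = (fun q : ℝ × ℝ × ℝ =>
        ((-(1/4) * ((d₁:ℝ) * (1 - κ₁))) * q.2.1 + (-(1/4) * ((d₂:ℝ) * (1 - κ₂))) * q.2.2) / q.1 ^ 2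
          + (-(n/2)) / q.1 + ((1/4) * ((d₁:ℝ) * κ₁)) / q.2.1
          + ((1/4) * ((d₂:ℝ) * κ₂)) / q.2.2) := by
      funext q; rw [hS]; ring
    rw [hfun]
    have h := hasFDerivAt_pattern (-(1/4) * ((d₁:ℝ) * (1 - κ₁))) (-(1/4) * ((d₂:ℝ) * (1 - κ₂)))
      (-(n/2)) ((1/4) * ((d₁:ℝ) * κ₁)) ((1/4) * ((d₂:ℝ) * κ₂)) p.1 p.2.1 p.2.2
      h1.ne' h2.ne' h3.ne'
    convert h using 2 <;> ring
  -- criticality characterization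
  have hcrit : ∀ p ∈ M0, ((∀ v : ℝ × ℝ × ℝ, fderiv ℝ F p v = 0 → fderiv ℝ S p v = 0) ↔
      (a * (p.2.2 / p.1) ^ 3 + b * (p.2.2 / p.1) ^ 2 + c * (p.2.2 / p.1) + d = 0 ∧
        3 * a * (p.2.2 / p.1) ^ 2 + 2 * b * (p.2.2 / p.1) + c = 0)) := by
    intro p hp
    obtain ⟨h1, h2, h3, hβ⟩ := point_data p hp
    have hSd' := (hSd p h1 h2 h3).fderiv
    have hFd' := (hFd p h1 h2 h3).fderiv
    obtain ⟨hE1, hE2⟩ := E_ident (d₁:ℝ) (d₂:ℝ) κ₁ κ₂ n Tp T₁ T₂ p.2.1 p.2.2 hd₁' hd₂' hn0 hTp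
      hT₁ hT₂ h2 h3 p.1 hβ a b c d ha hb hc hd
    constructor
    · intro hL
      have hw₁F : fderiv ℝ F p (p.1 ^ 2 / (n * Tp), p.2.1 ^ 2 / ((d₁:ℝ) * T₁), (0:ℝ)) = 0 := by
        rw [hFd']; simp only [lmap_apply]; field_simp; ring
      have hw₂F : fderiv ℝ F p (p.1 ^ 2 / (n * Tp), (0:ℝ), p.2.2 ^ 2 / ((d₂:ℝ) * T₂)) = 0 := by
        rw [hFd']; simp only [lmap_apply]; field_simp; ring
      have hE₁ := hL _ hw₁F
      have hE₂ := hL _ hw₂F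
      rw [hSd'] at hE₁ hE₂
      simp only [lmap_apply] at hE₁ hE₂
      have hA : -(p.2.1 ^ 2 / (4 * (d₁:ℝ) ^ 2 * T₁ ^ 2 * p.2.2 ^ 2)) *
            (a * (p.2.2 / p.1) ^ 3 + b * (p.2.2 / p.1) ^ 2 + c * (p.2.2 / p.1) + d)
          + (p.2.1 / (4 * (d₁:ℝ) * T₁ * p.2.2 * (n * Tp))) *
            (3 * a * (p.2.2 / p.1) ^ 2 + 2 * b * (p.2.2 / p.1) + c) = 0 := by
        rw [← hE1]; linear_combination hE₁
      have hB : (p.2.1 / (2 * (d₁:ℝ) * T₁ * p.2.2 * ((d₂:ℝ) * T₂))) *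
            (a * (p.2.2 / p.1) ^ 3 + b * (p.2.2 / p.1) ^ 2 + c * (p.2.2 / p.1) + d)
          - (1 / (4 * (d₂:ℝ) * T₂ * (n * Tp))) *
            (3 * a * (p.2.2 / p.1) ^ 2 + 2 * b * (p.2.2 / p.1) + c) = 0 := by
        rw [← hE2]; linear_combination hE₂
      have hPq : a * (p.2.2 / p.1) ^ 3 + b * (p.2.2 / p.1) ^ 2 + c * (p.2.2 / p.1) + d = 0 := by
        have h5 : (a * (p.2.2 / p.1) ^ 3 + b * (p.2.2 / p.1) ^ 2 + c * (p.2.2 / p.1) + d) *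
            (p.2.1 ^ 2 / (16 * (d₁:ℝ) ^ 2 * T₁ ^ 2 * p.2.2 ^ 2 * (d₂:ℝ) * T₂ * (n * Tp))) = 0 := by
          linear_combination (1 / (4 * (d₂:ℝ) * T₂ * (n * Tp))) * hA
            + (p.2.1 / (4 * (d₁:ℝ) * T₁ * p.2.2 * (n * Tp))) * hB
        rcases mul_eq_zero.mp h5 with h | h
        · exact h
        · exfalso
          have : p.2.1 ^ 2 / (16 * (d₁:ℝ) ^ 2 * T₁ ^ 2 * p.2.2 ^ 2 * (d₂:ℝ) * T₂ * (n * Tp)) ≠ 0 := by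
            positivity
          exact this h
      refine ⟨hPq, ?_⟩
      have h6 : (3 * a * (p.2.2 / p.1) ^ 2 + 2 * b * (p.2.2 / p.1) + c) *
          (1 / (4 * (d₂:ℝ) * T₂ * (n * Tp))) = 0 := by
        linear_combination -hB + (p.2.1 / (2 * (d₁:ℝ) * T₁ * p.2.2 * ((d₂:ℝ) * T₂))) * hPq
      rcases mul_eq_zero.mp h6 with h | h
      · exact h
      · exfalso
        have : 1 / (4 * (d₂:ℝ) * T₂ * (n * Tp)) ≠ 0 := by positivity
        exact this h
    · rintro ⟨hP, hP'⟩ v hvF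
      rw [hFd'] at hvF
      simp only [lmap_apply] at hvF
      rw [hSd']
      simp only [lmap_apply]
      rw [hP, hP'] at hE1 hE2
      simp only [mul_zero, zero_add, add_zero, neg_zero, sub_zero, zero_sub] at hE1 hE2
      have h1' : p.1 ≠ 0 := h1.ne'
      have h2' : p.2.1 ≠ 0 := h2.ne'
      have h3' : p.2.2 ≠ 0 := h3.ne'
      have hn' : n ≠ 0 := hn0.ne'
      have hTp' : Tp ≠ 0 := hTp.ne'
      linear_combination (norm := (field_simp; ring)) ((d₁:ℝ) * T₁ * v.2.1 / p.2.1 ^ 2) * hE1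
        + ((d₂:ℝ) * T₂ * v.2.2 / p.2.2 ^ 2) * hE2
        + (((1/2) * ((d₁:ℝ) * (1 - κ₁) * p.2.1 + (d₂:ℝ) * (1 - κ₂) * p.2.2) / p.1 ^ 3
            + n / (2 * p.1 ^ 2)) * p.1 ^ 2 / (n * Tp)) * hvF
  constructor
  · -- forward direction
    rintro ⟨p, hp, hcr, hnmax, hnmin⟩
    obtain ⟨h1, h2, h3, hβ⟩ := point_data p hp
    obtain ⟨hP, hP'⟩ := (hcrit p hp).mp hcr
    set x₀ := p.2.2 / p.1 with hx₀def
    have haρ : a * ((-b - 2 * a * x₀) / a) = -b - 2 * a * x₀ := by field_simp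
    set ρ := (-b - 2 * a * x₀) / a with hρdef
    have hfact : ∀ x : ℝ, a * x ^ 3 + b * x ^ 2 + c * x + d = a * (x - x₀) ^ 2 * (x - ρ) :=
      cubic_factor a b c d x₀ ρ haρ hP hP'
    have hSp0 : S p = 0 := by rw [hSval p hp, ← hx₀def, hP]; ring
    have hxc : ContinuousAt (fun q : ℝ × ℝ × ℝ => q.2.2 / q.1) p :=
      (continuous_snd.snd.continuousAt).div continuous_fst.continuousAt h1.ne'
    have hρeq : ρ = x₀ := by
      by_contra hne
      rcases lt_or_gt_of_ne hne with hlt | hgt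
      · apply hnmax
        show ∀ᶠ q in nhdsWithin p M0, S q ≤ S p
        have hev1 : ∀ᶠ q in nhdsWithin p M0, ρ < q.2.2 / q.1 :=
          nhdsWithin_le_nhds (hxc.preimage_mem_nhds (Ioi_mem_nhds hlt))
        filter_upwards [hev1, eventually_mem_nhdsWithin] with q hq1 hq2
        obtain ⟨hq1', hq2', hq3', _⟩ := point_data q hq2
        rw [hSp0, hSval q hq2, hfact]
        have hnn : 0 ≤ a * (q.2.2 / q.1 - x₀) ^ 2 * (q.2.2 / q.1 - ρ) :=
          mul_nonneg (mul_nonneg ha0.le (sq_nonneg _)) (by linarith)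
        have hpos : 0 ≤ q.2.1 / (4 * (d₁:ℝ) * T₁ * q.2.2 ^ 2) := by positivity
        exact sign_helper3 _ _ hpos hnn
      · apply hnmin
        show ∀ᶠ q in nhdsWithin p M0, S p ≤ S q
        have hev1 : ∀ᶠ q in nhdsWithin p M0, q.2.2 / q.1 < ρ :=
          nhdsWithin_le_nhds (hxc.preimage_mem_nhds (Iio_mem_nhds hgt))
        filter_upwards [hev1, eventually_mem_nhdsWithin] with q hq1 hq2
        obtain ⟨hq1', hq2', hq3', _⟩ := point_data q hq2
        rw [hSp0, hSval q hq2, hfact]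
        have hnn : a * (q.2.2 / q.1 - x₀) ^ 2 * (q.2.2 / q.1 - ρ) ≤ 0 :=
          mul_nonpos_of_nonneg_of_nonpos (mul_nonneg ha0.le (sq_nonneg _)) (by linarith)
        have hpos : 0 ≤ q.2.1 / (4 * (d₁:ℝ) * T₁ * q.2.2 ^ 2) := by positivity
        exact sign_helper4 _ _ hpos hnn
    have hbx : b = -3 * a * x₀ := by
      have h8 : a * ρ = -b - 2 * a * x₀ := haρ
      rw [hρeq] at h8
      linarith
    have hcx : c = 3 * a * x₀ ^ 2 := by linear_combination hP' - 2 * x₀ * hbx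
    have hdx : d = -a * x₀ ^ 3 := by linear_combination hP - x₀ ^ 2 * hbx - x₀ * hcx
    have hRtx : Rt = x₀ := by
      rw [hRt, hbx]
      field_simp
    refine ⟨?_, ?_, ?_⟩
    · rw [hDisc, hbx, hcx, hdx]; ring
    · rw [hbx, hcx]; ring
    · rw [hRtx]; exact hxgt p hp
  · -- backward direction
    rintro ⟨hD0, hb2, hRtgt⟩
    have h3a : (3 : ℝ) * a ≠ 0 := by positivity
    have hbx : b = -3 * a * Rt := by
      rw [hRt]; field_simp
    have hcx : c = 3 * a * Rt ^ 2 := by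
      apply mul_left_cancel₀ h3a
      have h9 : b ^ 2 = 9 * a ^ 2 * Rt ^ 2 := by rw [hbx]; ring
      linear_combination -hb2 + h9
    have hdx : d = -a * Rt ^ 3 := by
      have hkey : 27 * a ^ 2 * Disc = -(27 * a ^ 2 * d - b ^ 3) ^ 2 := by
        rw [hDisc]; exact disc_identity a b c d hb2
      rw [hD0, mul_zero] at hkey
      have h10 : 27 * a ^ 2 * d - b ^ 3 = 0 := by nlinarith [sq_nonneg (27 * a ^ 2 * d - b ^ 3)]
      apply mul_left_cancel₀ (show (27:ℝ) * a ^ 2 ≠ 0 by positivity)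
      rw [hbx] at h10
      linear_combination h10
    have hfact : ∀ x : ℝ, a * x ^ 3 + b * x ^ 2 + c * x + d = a * (x - Rt) ^ 3 := by
      intro x; rw [hbx, hcx, hdx]; ring
    have hr0 : 0 < (d₂ : ℝ) * T₂ / (n * Tp) := by positivity
    have hRt0 : 0 < Rt := lt_trans hr0 hRtgt
    have hden : 0 < n * Tp * Rt - (d₂:ℝ) * T₂ := by
      rw [div_lt_iff₀ (by positivity : (0:ℝ) < n * Tp)] at hRtgt
      linarith
    -- the curve x ↦ (1, A x, x) inside M0
    set A : ℝ → ℝ := fun x => (d₁:ℝ) * T₁ * x / (n * Tp * x - (d₂:ℝ) * T₂) with hAdef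
    set cv : ℝ → ℝ × ℝ × ℝ := fun x => ((1:ℝ), A x, x) with hcvdef
    have hmem : ∀ x : ℝ, (d₂:ℝ) * T₂ / (n * Tp) < x → cv x ∈ M0 := by
      intro x hx
      have hdx0 : 0 < n * Tp * x - (d₂:ℝ) * T₂ := by
        rw [div_lt_iff₀ (by positivity : (0:ℝ) < n * Tp)] at hx
        linarith
      have hx0 : 0 < x := lt_trans hr0 hx
      rw [hM0]
      refine ⟨one_pos, by simp only [hcvdef, hAdef]; positivity, by simpa [hcvdef] using hx0, ?_⟩
      rw [hF]
      simp only [hcvdef, hAdef]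
      field_simp
      ring
    have hpM : cv Rt ∈ M0 := hmem Rt hRtgt
    have hxval : ∀ x : ℝ, (cv x).2.2 / (cv x).1 = x := by intro x; simp [hcvdef]
    have hScv : ∀ x : ℝ, (d₂:ℝ) * T₂ / (n * Tp) < x →
        S (cv x) = -(A x / (4 * (d₁:ℝ) * T₁ * x ^ 2)) * (a * (x - Rt) ^ 3) := by
      intro x hx
      rw [hSval (cv x) (hmem x hx)]
      rw [hxval x, hfact x]
    have hSpos : ∀ x : ℝ, (d₂:ℝ) * T₂ / (n * Tp) < x → x < Rt → 0 < S (cv x) := by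
      intro x hx hxRt
      rw [hScv x hx]
      have hdx0 : 0 < n * Tp * x - (d₂:ℝ) * T₂ := by
        rw [div_lt_iff₀ (by positivity : (0:ℝ) < n * Tp)] at hx
        linarith
      have hx0 : 0 < x := lt_trans hr0 hx
      have hA0 : 0 < A x := by
        simp only [hAdef]
        exact div_pos (by positivity) hdx0
      have hcub : a * (x - Rt) ^ 3 < 0 := by
        apply mul_neg_of_pos_of_neg ha0
        exact Odd.pow_neg ⟨1, by norm_num⟩ (by linarith)
      exact sign_helper1 _ _ (div_pos hA0 (by positivity : (0:ℝ) < 4 * (d₁:ℝ) * T₁ * x ^ 2)) hcub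
    have hSneg : ∀ x : ℝ, Rt < x → S (cv x) < 0 := by
      intro x hxRt
      have hx : (d₂:ℝ) * T₂ / (n * Tp) < x := lt_trans hRtgt hxRt
      rw [hScv x hx]
      have hdx0 : 0 < n * Tp * x - (d₂:ℝ) * T₂ := by
        rw [div_lt_iff₀ (by positivity : (0:ℝ) < n * Tp)] at hx
        linarith
      have hx0 : 0 < x := lt_trans hr0 hx
      have hA0 : 0 < A x := by
        simp only [hAdef]
        exact div_pos (by positivity) hdx0
      have hcub : 0 < a * (x - Rt) ^ 3 :=
        mul_pos ha0 (pow_pos (by linarith) 3)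
      exact sign_helper2 _ _ (div_pos hA0 (by positivity : (0:ℝ) < 4 * (d₁:ℝ) * T₁ * x ^ 2)) hcub
    have hSp0 : S (cv Rt) = 0 := by
      rw [hScv Rt hRtgt]; ring
    have hcvc : ContinuousAt cv Rt := by
      rw [hcvdef]
      apply ContinuousAt.prodMk continuousAt_const
      apply ContinuousAt.prodMk
      · rw [hAdef]
        exact (continuousAt_const.mul continuousAt_id).div
          ((continuousAt_const.mul continuousAt_id).sub continuousAt_const) hden.ne'
      · exact continuousAt_id
    have htd : ∀ s : Set ℝ, (∀ x ∈ s, (d₂:ℝ) * T₂ / (n * Tp) < x) →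
        Filter.Tendsto cv (nhdsWithin Rt s) (nhdsWithin (cv Rt) M0) := by
      intro s hs
      apply tendsto_nhdsWithin_of_tendsto_nhds_of_eventually_within
      · exact hcvc.tendsto.mono_left nhdsWithin_le_nhds
      · filter_upwards [eventually_mem_nhdsWithin] with x hx
        exact hmem x (hs x hx)
    refine ⟨cv Rt, hpM, ?_, ?_, ?_⟩
    · apply (hcrit (cv Rt) hpM).mpr
      rw [hxval Rt]
      constructor
      · rw [hbx, hcx, hdx]; ring
      · rw [hbx, hcx]; ring
    · intro hmax
      have hmax' : ∀ᶠ q in nhdsWithin (cv Rt) M0, S q ≤ 0 := by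
        rw [← hSp0]; exact hmax
      have hIoo : ∀ x ∈ Set.Ioo ((d₂:ℝ) * T₂ / (n * Tp)) Rt, (d₂:ℝ) * T₂ / (n * Tp) < x :=
        fun x hx => hx.1
      have hthis := (htd _ hIoo).eventually hmax'
      haveI : Filter.NeBot (nhdsWithin Rt (Set.Ioo ((d₂:ℝ) * T₂ / (n * Tp)) Rt)) :=
        right_nhdsWithin_Ioo_neBot hRtgt
      obtain ⟨x, hx1, hx2⟩ := (hthis.and eventually_mem_nhdsWithin).exists
      exact absurd hx1 (not_le.mpr (hSpos x hx2.1 hx2.2))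
    · intro hmin
      have hmin' : ∀ᶠ q in nhdsWithin (cv Rt) M0, 0 ≤ S q := by
        rw [← hSp0]; exact hmin
      have hIoo : ∀ x ∈ Set.Ioo Rt (Rt + 1), (d₂:ℝ) * T₂ / (n * Tp) < x :=
        fun x hx => lt_trans hRtgt hx.1
      have hthis := (htd _ hIoo).eventually hmin'
      haveI : Filter.NeBot (nhdsWithin Rt (Set.Ioo Rt (Rt + 1))) :=
        left_nhdsWithin_Ioo_neBot (by linarith)
      obtain ⟨x, hx1, hx2⟩ := (hthis.and eventually_mem_nhdsWithin).exists
      exact absurd hx1 (not_le.mpr (hSneg x hx2.1))
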